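/- arXiv:2409.13800 — 3 statements merged into one kernel-verified Lean document; each statement's English description precedes it below -/
import Mathlib

section
/- Let φ : ℝⁿ → ℝⁿ be a smooth diffeomorphism with Jacobian determinant Jφ = det(∇φ). Then the Piola identity holds: DIV( Jφ · (∇φ⁻¹ ∘ φ) ) = 0, i.e. for each spatial index a, ∂/∂X^A [ Jφ(X) · (∂(φ⁻¹)^A/∂x^a)(φ(X)) ] = 0 for all X. -/
open scoped BigOperators

/-- Partial derivative of a scalar field on `ℝⁿ` in the `i`-th coordinate direction. -/
noncomputable def pd {n : ℕ} (i : Fin n) (f : (Fin n → ℝ) → ℝ) (x : Fin n → ℝ) : ℝ :=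
  fderiv ℝ f x (Pi.single i 1)

/-- Jacobian matrix of a map `ℝⁿ → ℝⁿ`: entry `(i, j)` is `∂φ^i/∂x^j`. -/
noncomputable def jac {n : ℕ} (φ : (Fin n → ℝ) → (Fin n → ℝ)) (x : Fin n → ℝ) :
    Matrix (Fin n) (Fin n) ℝ :=
  Matrix.of fun i j => pd j (fun y => φ y i) x

/-- Jacobian determinant `Jφ = det ∇φ`. -/
noncomputable def Jdet {n : ℕ} (φ : (Fin n → ℝ) → (Fin n → ℝ)) (x : Fin n → ℝ) : ℝ :=
  (jac φ x).det

noncomputable def detCM (n : ℕ) : ContinuousMultilinearMap ℝ (fun _ : Fin n => (Fin n → ℝ)) ℝ where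
  toMultilinearMap := (Matrix.detRowAlternating : (Fin n → ℝ) [⋀^Fin n]→ₗ[ℝ] ℝ).toMultilinearMap
  cont := by
    show Continuous fun m : Fin n → Fin n → ℝ => Matrix.det (Matrix.of m)
    simp only [Matrix.det_apply']
    refine continuous_finset_sum _ fun σ _ => Continuous.mul continuous_const ?_
    exact continuous_finset_prod _ fun i _ =>
      ((continuous_apply i).comp (continuous_apply (σ i)) : Continuous fun m : Fin n → Fin n → ℝ => m (σ i) i)

lemma detCM_apply {n : ℕ} (m : Fin n → Fin n → ℝ) : detCM n m = Matrix.det (Matrix.of m) := rfl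

lemma detCM_alt {n : ℕ} (m : Fin n → Fin n → ℝ) :
    detCM n m = Matrix.detRowAlternating m := rfl

/-- entry of the Jacobian matrix via the total derivative -/
lemma jac_apply_fderiv {n : ℕ} {φ : (Fin n → ℝ) → (Fin n → ℝ)} {Y : Fin n → ℝ}
    (h : DifferentiableAt ℝ φ Y) (i j : Fin n) :
    jac φ Y i j = fderiv ℝ φ Y (Pi.single j 1) i := by
  have hc : HasFDerivAt (fun y => φ y i)
      ((ContinuousLinearMap.proj i).comp (fderiv ℝ φ Y)) Y := by
    exact ((ContinuousLinearMap.proj (R := ℝ) (φ := fun _ : Fin n => ℝ) i).hasFDerivAt).comp Y h.hasFDerivAt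
  show pd j (fun y => φ y i) Y = _
  rw [pd, hc.fderiv]
  rfl

lemma sum_sym_antisym {N : ℕ} (s T : Fin N → Fin N → ℝ) (hs : ∀ A B, s A B = s B A)
    (hT : ∀ A B, T B A = -T A B) : (∑ A : Fin N, ∑ B : Fin N, s A B * T A B) = 0 := by
  have h : (∑ A : Fin N, ∑ B : Fin N, s A B * T A B)
      = ∑ A : Fin N, ∑ B : Fin N, -(s A B * T A B) := by
    rw [Finset.sum_comm]
    refine Finset.sum_congr rfl fun A _ => Finset.sum_congr rfl fun B _ => ?_
    rw [hs B A, hT A B]; ring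
  have h2 : (∑ A : Fin N, ∑ B : Fin N, -(s A B * T A B))
      = -∑ A : Fin N, ∑ B : Fin N, s A B * T A B := by
    simp [Finset.sum_neg_distrib]
  linarith [h.trans h2]

lemma piola_adjugate {n : ℕ} (φ : (Fin n → ℝ) → (Fin n → ℝ)) (hφ : ContDiff ℝ 2 φ)
    (X : Fin n → ℝ) (a : Fin n) :
    ∑ A : Fin n, pd A (fun Y => Matrix.adjugate (jac φ Y) A a) X = 0 := by
  classical
  have hφd : Differentiable ℝ φ := hφ.differentiable (by norm_num)
  have hf' : ∀ y, HasFDerivAt φ (fderiv ℝ φ y) y := fun y => (hφd y).hasFDerivAt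
  have hC1 : ContDiff ℝ 1 (fderiv ℝ φ) := hφ.fderiv_right (by norm_num)
  set f'' := fderiv ℝ (fderiv ℝ φ) X with hf''def
  have h2 : HasFDerivAt (fderiv ℝ φ) f'' X := ((hC1.differentiable (by norm_num)) X).hasFDerivAt
  have hsymm : ∀ v w, f'' v w = f'' w v := second_derivative_symmetric hf' h2
  set e : Fin n → (Fin n → ℝ) := fun i => Pi.single i 1 with he
  set r : (Fin n → ℝ) → Fin n → Fin n → ℝ := fun Y b B => fderiv ℝ φ Y (e B) b with hr
  -- the summand as a multilinear expression
  have hrw : ∀ A : Fin n, (fun Y => Matrix.adjugate (jac φ Y) A a)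
      = fun Y => detCM n (fun b => Function.update (r Y) a (e A) b) := by
    intro A
    funext Y
    rw [Matrix.adjugate_apply]
    have hjac : jac φ Y = Matrix.of (r Y) := by
      ext i j
      exact jac_apply_fderiv (hφd Y) i j
    rw [hjac]
    rfl
  -- derivative of each row
  set D : Fin n → ((Fin n → ℝ) →L[ℝ] (Fin n → ℝ)) := fun b => ContinuousLinearMap.pi fun B =>
    (ContinuousLinearMap.proj b).comp
      ((ContinuousLinearMap.apply ℝ (Fin n → ℝ) (e B)).comp f'') with hD
  have hDrow : ∀ b, HasFDerivAt (fun Y => r Y b) (D b) X := by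
    intro b
    apply hasFDerivAt_pi''
    intro B
    rw [hD]
    rw [ContinuousLinearMap.proj_pi]
    exact (((ContinuousLinearMap.proj (R := ℝ) (φ := fun _ : Fin n => ℝ) b).comp
      (ContinuousLinearMap.apply ℝ (Fin n → ℝ) (e B))).hasFDerivAt).comp X h2
  set g' : Fin n → ((Fin n → ℝ) →L[ℝ] (Fin n → ℝ)) := fun b => if b = a then 0 else D b with hg'
  have hg : ∀ (A : Fin n) (b : Fin n),
      HasFDerivAt (fun Y => Function.update (r Y) a (e A) b) (g' b) X := by
    intro A b
    by_cases hb : b = a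
    · subst hb
      have : (fun Y => Function.update (r Y) b (e A) b) = fun _ => e A := by
        funext Y; exact Function.update_self b (e A) (r Y)
      rw [this, hg']
      simp only [if_pos rfl]
      exact hasFDerivAt_const _ _
    · have : (fun Y => Function.update (r Y) a (e A) b) = fun Y => r Y b := by
        funext Y; exact Function.update_of_ne hb (e A) (r Y)
      rw [this, hg']
      simp only [if_neg hb]
      exact hDrow b
  have hpd : ∀ A : Fin n, pd A (fun Y => Matrix.adjugate (jac φ Y) A a) X
      = ∑ b : Fin n, detCM n (Function.update (Function.update (r X) a (e A)) b (g' b (e A))) := by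
    intro A
    have hFD := HasFDerivAt.multilinear_comp (detCM n) (hg A)
    rw [hrw A, pd, hFD.fderiv]
    rw [ContinuousLinearMap.sum_apply]
    refine Finset.sum_congr rfl fun b _ => ?_
    rfl
  have hv : ∀ v : Fin n → ℝ, v = ∑ B : Fin n, v B • e B := by
    intro v
    funext C
    rw [Finset.sum_apply]
    simp [he, Pi.single_apply, mul_ite]
  calc ∑ A : Fin n, pd A (fun Y => Matrix.adjugate (jac φ Y) A a) X
      = ∑ A : Fin n, ∑ b : Fin n,
          detCM n (Function.update (Function.update (r X) a (e A)) b (g' b (e A))) :=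
        Finset.sum_congr rfl fun A _ => hpd A
    _ = ∑ b : Fin n, ∑ A : Fin n,
          detCM n (Function.update (Function.update (r X) a (e A)) b (g' b (e A))) :=
        Finset.sum_comm
    _ = 0 := by
        refine Finset.sum_eq_zero fun b _ => ?_
        by_cases hb : b = a
        · subst hb
          refine Finset.sum_eq_zero fun A _ => ?_
          have h0 : g' b = 0 := by rw [hg']; exact if_pos rfl
          rw [h0]
          exact (detCM n).toMultilinearMap.map_update_zero _ b
        · have hDb : ∀ A : Fin n, g' b (e A) = fun B => f'' (e A) (e B) b := by
            intro A
            have h1 : g' b = D b := by rw [hg']; exact if_neg hb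
            rw [h1, hD]
            rfl
          have hterm : ∀ A : Fin n,
              detCM n (Function.update (Function.update (r X) a (e A)) b (g' b (e A)))
              = ∑ B : Fin n, (f'' (e A) (e B) b) *
                  detCM n (Function.update (Function.update (r X) a (e A)) b (e B)) := by
            intro A
            rw [hDb A, hv (fun B => f'' (e A) (e B) b)]
            rw [show ((detCM n) (Function.update (Function.update (r X) a (e A)) b
                  (∑ B : Fin n, f'' (e A) (e B) b • e B)))
                = ∑ B : Fin n, (detCM n) (Function.update (Function.update (r X) a (e A)) b
                  (f'' (e A) (e B) b • e B)) from
              (detCM n).toMultilinearMap.map_update_sum Finset.univ b _ _]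
            refine Finset.sum_congr rfl fun B _ => ?_
            rw [show ((detCM n) (Function.update (Function.update (r X) a (e A)) b
                  (f'' (e A) (e B) b • e B)))
                = f'' (e A) (e B) b • (detCM n) (Function.update (Function.update (r X) a (e A)) b (e B)) from
              (detCM n).toMultilinearMap.map_update_smul _ b _ _]
            rw [smul_eq_mul]
          rw [Finset.sum_congr rfl fun A _ => hterm A]
          refine sum_sym_antisym (fun A B => f'' (e A) (e B) b)
            (fun A B => detCM n (Function.update (Function.update (r X) a (e A)) b (e B)))
            (fun A B => congrFun (hsymm (e A) (e B)) b) (fun A B => ?_)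
          show detCM n (Function.update (Function.update (r X) a (e B)) b (e A))
            = - detCM n (Function.update (Function.update (r X) a (e A)) b (e B))
          have hswap : (Function.update (Function.update (r X) a (e B)) b (e A))
              = (Function.update (Function.update (r X) a (e A)) b (e B)) ∘ Equiv.swap a b := by
            funext c
            simp only [Function.comp_apply, Function.update_apply, Equiv.swap_apply_def]
            split_ifs
            all_goals first
              | rfl
              | exact absurd ((‹c = b›).symm.trans ‹c = a›) hb
              | exact absurd rfl ‹¬b = b›
              | exact absurd rfl ‹¬a = a›
              | exact absurd rfl ‹¬c = c›
              | exact absurd (‹a = b›).symm hb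
          rw [detCM_alt, detCM_alt, hswap]
          exact (Matrix.detRowAlternating : (Fin n → ℝ) [⋀^Fin n]→ₗ[ℝ] ℝ).map_swap _ (Ne.symm hb)

lemma jac_toMatrix {n : ℕ} {f : (Fin n → ℝ) → (Fin n → ℝ)} {Y : Fin n → ℝ}
    (h : DifferentiableAt ℝ f Y) :
    jac f Y = LinearMap.toMatrix' ((fderiv ℝ f Y : (Fin n → ℝ) →L[ℝ] (Fin n → ℝ)) :
      (Fin n → ℝ) →ₗ[ℝ] (Fin n → ℝ)) := by
  ext i j
  rw [LinearMap.toMatrix'_apply, jac_apply_fderiv h i j]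
  have hvec : (fun j' => if j' = j then (1:ℝ) else 0) = Pi.single j 1 := by
    funext j'
    simp [Pi.single_apply]
  rfl


/-- **Piola identity**: for a `C²` diffeomorphism `φ : ℝⁿ → ℝⁿ` with inverse `ψ`,
`DIV( Jφ · (∇φ⁻¹ ∘ φ) ) = 0`, i.e. for each spatial index `a`,
`∑_A ∂/∂X^A [ Jφ(X) · (∂(φ⁻¹)^A/∂x^a)(φ(X)) ] = 0` for all `X`. -/
theorem piola_identity {n : ℕ} (φ ψ : (Fin n → ℝ) → (Fin n → ℝ))
    (hφ : ContDiff ℝ 2 φ) (hψ : ContDiff ℝ 2 ψ)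
    (hlr : Function.LeftInverse ψ φ) (hrl : Function.RightInverse ψ φ) :
    ∀ (X : Fin n → ℝ) (a : Fin n),
      ∑ A : Fin n, pd A (fun Y => Jdet φ Y * jac ψ (φ Y) A a) X = 0 := by
  intro X a
  have hφd : Differentiable ℝ φ := hφ.differentiable (by norm_num)
  have hψd : Differentiable ℝ ψ := hψ.differentiable (by norm_num)
  have hkey : ∀ (Y : Fin n → ℝ) (A : Fin n),
      Jdet φ Y * jac ψ (φ Y) A a = Matrix.adjugate (jac φ Y) A a := by
    intro Y A
    have hcomp1 : (fderiv ℝ ψ (φ Y)).comp (fderiv ℝ φ Y)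
        = ContinuousLinearMap.id ℝ (Fin n → ℝ) := by
      have h1 : HasFDerivAt (ψ ∘ φ) ((fderiv ℝ ψ (φ Y)).comp (fderiv ℝ φ Y)) Y :=
        (hψd (φ Y)).hasFDerivAt.comp Y (hφd Y).hasFDerivAt
      have h2 : (ψ ∘ φ) = id := funext hlr
      rw [h2] at h1
      exact h1.unique (hasFDerivAt_id Y)
    have hcomp2 : (fderiv ℝ φ Y).comp (fderiv ℝ ψ (φ Y))
        = ContinuousLinearMap.id ℝ (Fin n → ℝ) := by
      have h1 : HasFDerivAt (φ ∘ ψ) ((fderiv ℝ φ (ψ (φ Y))).comp (fderiv ℝ ψ (φ Y))) (φ Y) :=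
        (hφd (ψ (φ Y))).hasFDerivAt.comp (φ Y) (hψd (φ Y)).hasFDerivAt
      rw [hlr Y] at h1
      have h2 : (φ ∘ ψ) = id := funext hrl
      rw [h2] at h1
      exact h1.unique (hasFDerivAt_id (φ Y))
    have hNM : jac ψ (φ Y) * jac φ Y = 1 := by
      rw [jac_toMatrix (hψd (φ Y)), jac_toMatrix (hφd Y), ← LinearMap.toMatrix'_comp,
        ← ContinuousLinearMap.toLinearMap_comp, hcomp1, ContinuousLinearMap.coe_id,
        LinearMap.toMatrix'_id]
    have hMN : jac φ Y * jac ψ (φ Y) = 1 := by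
      rw [jac_toMatrix (hφd Y), jac_toMatrix (hψd (φ Y)), ← LinearMap.toMatrix'_comp,
        ← ContinuousLinearMap.toLinearMap_comp, hcomp2, ContinuousLinearMap.coe_id,
        LinearMap.toMatrix'_id]
    have hadj : Matrix.adjugate (jac φ Y) = (jac φ Y).det • jac ψ (φ Y) := by
      calc Matrix.adjugate (jac φ Y) = 1 * Matrix.adjugate (jac φ Y) := (one_mul _).symm
        _ = (jac ψ (φ Y) * jac φ Y) * Matrix.adjugate (jac φ Y) := by rw [hNM]
        _ = jac ψ (φ Y) * (jac φ Y * Matrix.adjugate (jac φ Y)) := by rw [Matrix.mul_assoc]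
        _ = jac ψ (φ Y) * ((jac φ Y).det • 1) := by rw [Matrix.mul_adjugate]
        _ = (jac φ Y).det • (jac ψ (φ Y) * 1) := by rw [Matrix.mul_smul]
        _ = (jac φ Y).det • jac ψ (φ Y) := by rw [Matrix.mul_one]
    rw [hadj]
    show Jdet φ Y * jac ψ (φ Y) A a = ((jac φ Y).det • jac ψ (φ Y)) A a
    rw [Matrix.smul_apply, smul_eq_mul]
    rfl
  calc ∑ A : Fin n, pd A (fun Y => Jdet φ Y * jac ψ (φ Y) A a) X
      = ∑ A : Fin n, pd A (fun Y => Matrix.adjugate (jac φ Y) A a) X := by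
        refine Finset.sum_congr rfl fun A _ => ?_
        congr 1
        funext Y
        exact hkey Y A
    _ = 0 := piola_adjugate φ hφ X a
end

section
/- Let (u, h) be smooth solutions on Ω ⊂ ℝ² of the rotating shallow water equations with sources: h(∂_t u + u·∇u + 2ω×u) = −gh∇(h+Z) − θ_h(u+R) + b and ∂_t h + div(hu) = θ_h, with h > 0 and curl R = 2ω. Then the total energy density 𝔢 = ½h|u|² + ½g(h+Z)² satisfies ∂_t 𝔢 + div( 𝔢 u + ½ g (h² − Z²) u ) = b·u + θ_h ( g(h+Z) − u·R − ½|u|² ). -/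
open scoped BigOperators

/-- Shallow water total energy density `𝔢 = ½h|u|² + ½g(h+Z)²`. -/
noncomputable def swEnergy (g : ℝ) (Z : (Fin 2 → ℝ) → ℝ)
    (u : ℝ → (Fin 2 → ℝ) → (Fin 2 → ℝ)) (h : ℝ → (Fin 2 → ℝ) → ℝ)
    (t : ℝ) (x : Fin 2 → ℝ) : ℝ :=
  (1/2) * h t x * (∑ i, (u t x i)^2) + (1/2) * g * (h t x + Z x)^2

lemma pd_eq {n : ℕ} (i : Fin n) {f : (Fin n → ℝ) → ℝ} {f' : (Fin n → ℝ) →L[ℝ] ℝ}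
    {x : Fin n → ℝ} (hf : HasFDerivAt f f' x) : pd i f x = f' (Pi.single i 1) := by
  rw [pd, hf.fderiv]

/-- Local energy balance for the rotating shallow water equations with sources:
if `h(∂_t u + u·∇u + 2ω×u) = −gh∇(h+Z) − θ_h(u+R) + b` and `∂_t h + div(hu) = θ_h`,
with `h > 0` and `curl R = 2ω`, then
`∂_t 𝔢 + div(𝔢 u + ½ g (h² − Z²) u) = b·u + θ_h(g(h+Z) − u·R − ½|u|²)`. -/
theorem shallow_water_energy_balance
    (g ω : ℝ) (hg : 0 < g)
    (Z : (Fin 2 → ℝ) → ℝ) (R : (Fin 2 → ℝ) → (Fin 2 → ℝ))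
    (u b : ℝ → (Fin 2 → ℝ) → (Fin 2 → ℝ)) (h θ : ℝ → (Fin 2 → ℝ) → ℝ)
    (hZ : ContDiff ℝ 1 Z) (hR : ∀ i, ContDiff ℝ 1 (fun y => R y i))
    (hu : ∀ i, ContDiff ℝ 1 (fun p : ℝ × (Fin 2 → ℝ) => u p.1 p.2 i))
    (hh : ContDiff ℝ 1 (fun p : ℝ × (Fin 2 → ℝ) => h p.1 p.2))
    (hpos : ∀ t x, 0 < h t x)
    (hcurl : ∀ x, pd 0 (fun y => R y 1) x - pd 1 (fun y => R y 0) x = 2 * ω)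
    (hmom : ∀ t x (i : Fin 2),
      h t x * (deriv (fun τ => u τ x i) t
          + (∑ j, u t x j * pd j (fun y => u t y i) x)
          + (if i = 0 then -(2 * ω * u t x 1) else 2 * ω * u t x 0))
      = - g * h t x * pd i (fun y => h t y + Z y) x
          - θ t x * (u t x i + R x i) + b t x i)
    (hmass : ∀ t x,
      deriv (fun τ => h τ x) t + ∑ j, pd j (fun y => h t y * u t y j) x = θ t x) :
    ∀ t x,
      deriv (fun τ => swEnergy g Z u h τ x) t
        + ∑ j, pd j (fun y =>
            swEnergy g Z u h t y * u t y j
              + (1/2) * g * ((h t y)^2 - (Z y)^2) * u t y j) x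
      = (∑ i, b t x i * u t x i)
        + θ t x * (g * (h t x + Z x) - (∑ i, u t x i * R x i)
            - (1/2) * ∑ i, (u t x i)^2) := by
  intro t x
  -- differentiability of slices
  have hdz : DifferentiableAt ℝ Z x := (hZ.differentiable one_ne_zero).differentiableAt
  have hsliceT : ∀ (F : ℝ × (Fin 2 → ℝ) → ℝ), ContDiff ℝ 1 F →
      DifferentiableAt ℝ (fun τ => F (τ, x)) t := by
    intro F hF
    exact DifferentiableAt.comp t ((hF.differentiable one_ne_zero).differentiableAt)
      (differentiableAt_id.prodMk (differentiableAt_const x))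
  have hsliceX : ∀ (F : ℝ × (Fin 2 → ℝ) → ℝ), ContDiff ℝ 1 F →
      DifferentiableAt ℝ (fun y => F (t, y)) x := by
    intro F hF
    exact DifferentiableAt.comp x ((hF.differentiable one_ne_zero).differentiableAt)
      ((differentiableAt_const t).prodMk differentiableAt_id)
  have dht : DifferentiableAt ℝ (fun τ => h τ x) t := hsliceT _ hh
  have dut : ∀ i : Fin 2, DifferentiableAt ℝ (fun τ => u τ x i) t :=
    fun i => hsliceT _ (hu i)
  have dhx : DifferentiableAt ℝ (fun y => h t y) x := hsliceX _ hh
  have dux : ∀ i : Fin 2, DifferentiableAt ℝ (fun y => u t y i) x :=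
    fun i => hsliceX _ (hu i)
  have fH := dhx.hasFDerivAt
  have fU : ∀ i : Fin 2, HasFDerivAt (fun y => u t y i)
      (fderiv ℝ (fun y => u t y i) x) x := fun i => (dux i).hasFDerivAt
  have fZ := hdz.hasFDerivAt
  have hHt := dht.hasDerivAt
  have hUt : ∀ i : Fin 2, HasDerivAt (fun τ => u τ x i)
      (deriv (fun τ => u τ x i) t) t := fun i => (dut i).hasDerivAt
  -- unfold swEnergy and sums, and powers
  simp only [swEnergy, Fin.sum_univ_two, pow_two] at *
  -- time derivative of energy
  have hEt := ((hHt.const_mul ((1:ℝ)/2)).mul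
        (((hUt 0).mul (hUt 0)).add ((hUt 1).mul (hUt 1)))).add
      (((hHt.add_const (Z x)).mul (hHt.add_const (Z x))).const_mul (1/2 * g))
  have hEd : deriv (fun τ => 1 / 2 * h τ x * (u τ x 0 * u τ x 0 + u τ x 1 * u τ x 1)
    + 1 / 2 * g * ((h τ x + Z x) * (h τ x + Z x))) t = _ := hEt.deriv
  rw [hEd]
  simp only [Pi.mul_apply, Pi.add_apply]
  -- spatial derivatives of the flux
  have hFlux : ∀ j : Fin 2, HasFDerivAt (fun y =>
      (1/2 * h t y * (u t y 0 * u t y 0 + u t y 1 * u t y 1)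
        + 1/2 * g * ((h t y + Z y) * (h t y + Z y))) * u t y j
      + 1/2 * g * (h t y * h t y - Z y * Z y) * u t y j)
      ((h t x * (u t x 0 * u t x 0 + u t x 1 * u t x 1) * (2⁻¹ : ℝ) +
          (h t x + Z x) * (h t x + Z x) * (2⁻¹ * g)) • fderiv ℝ (fun y => u t y j) x +
        ((h t x * h t x - Z x * Z x) * (2⁻¹ * g)) • fderiv ℝ (fun y => u t y j) x +
        u t x j • (((1/2 : ℝ) * h t x) • ((u t x 0) • fderiv ℝ (fun y => u t y 0) x +
            (u t x 0) • fderiv ℝ (fun y => u t y 0) x +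
            ((u t x 1) • fderiv ℝ (fun y => u t y 1) x +
             (u t x 1) • fderiv ℝ (fun y => u t y 1) x)) +
          ((u t x 0 * u t x 0 + u t x 1 * u t x 1) * (2⁻¹ : ℝ)) • fderiv ℝ (fun y => h t y) x +
          ((1/2 : ℝ) * g) • ((h t x + Z x) • (fderiv ℝ (fun y => h t y) x + fderiv ℝ Z x) +
            (h t x + Z x) • (fderiv ℝ (fun y => h t y) x + fderiv ℝ Z x)) +
          ((1/2 : ℝ) * g) • ((h t x) • fderiv ℝ (fun y => h t y) x +
            (h t x) • fderiv ℝ (fun y => h t y) x -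
            ((Z x) • fderiv ℝ Z x + (Z x) • fderiv ℝ Z x))) : _ →L[ℝ] ℝ) x := by
    intro j
    have := ((((fH.const_mul ((1:ℝ)/2)).mul
          (((fU 0).mul (fU 0)).add ((fU 1).mul (fU 1)))).add
        (((fH.add fZ).mul (fH.add fZ)).const_mul (1/2 * g))).mul (fU j)).add
      ((((fH.mul fH).sub (fZ.mul fZ)).const_mul (1/2 * g)).mul (fU j))
    refine this.congr_fderiv ?_
    ext v
    simp [ContinuousLinearMap.smul_apply, smul_eq_mul]
    ring
  rw [pd_eq 0 (hFlux 0), pd_eq 1 (hFlux 1)]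
  have M0 := hmom t x 0
  have M1 := hmom t x 1
  have Ms := hmass t x
  rw [if_neg (by decide : ¬(1:Fin 2) = 0)] at M1
  have fHZ : HasFDerivAt (fun y => h t y + Z y) _ x := fH.add fZ
  have fHU : ∀ i : Fin 2, HasFDerivAt (fun y => h t y * u t y i) _ x := fun i => fH.mul (fU i)
  simp only [if_pos rfl, reduceIte,
    pd_eq (0 : Fin 2) (fU 0), pd_eq (1 : Fin 2) (fU 0),
    pd_eq (0 : Fin 2) (fU 1), pd_eq (1 : Fin 2) (fU 1),
    pd_eq (0 : Fin 2) fHZ, pd_eq (1 : Fin 2) fHZ,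
    pd_eq (0 : Fin 2) (fHU 0), pd_eq (1 : Fin 2) (fHU 1),
    ContinuousLinearMap.add_apply, ContinuousLinearMap.smul_apply,
    ContinuousLinearMap.sub_apply, smul_eq_mul] at M0 M1 Ms ⊢
  linear_combination (u t x 0) * M0 + (u t x 1) * M1
    + (1/2 * (u t x 0 * u t x 0 + u t x 1 * u t x 1) + g * (h t x + Z x)) * Ms
end

section
/- Let l = l(u,ρ,s) be a smooth Lagrangian density and suppose smooth fields (u,ρ,s) on Ω satisfy ∂_t(∂l/∂u) + £_u(∂l/∂u) − ρ∇(∂l/∂ρ) − s∇(∂l/∂s) = b, ∂_t ρ + div(ρu) = θ_ρ, ∂_t s + div(su) = θ_s, where £_u m = u·∇m + (∇u)ᵀm + m div u. Then the energy density 𝔢 = (∂l/∂u)·u − l satisfies ∂_t 𝔢 = div( −((∂l/∂u)·u)u + ρ(∂l/∂ρ)u + s(∂l/∂s)u ) + b·u − θ_ρ ∂l/∂ρ − θ_s ∂l/∂s. -/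
open scoped BigOperators

/-- `(∂l/∂u)_i` of a Lagrangian density `l(u,ρ,s)`, evaluated at `(v, r, sv)`. -/
noncomputable def Dlu {n : ℕ} (l : (Fin n → ℝ) → ℝ → ℝ → ℝ)
    (v : Fin n → ℝ) (r sv : ℝ) (i : Fin n) : ℝ :=
  fderiv ℝ (fun w => l w r sv) v (Pi.single i 1)

/-- `∂l/∂ρ` evaluated at `(v, r, sv)`. -/
noncomputable def Dlρ {n : ℕ} (l : (Fin n → ℝ) → ℝ → ℝ → ℝ)
    (v : Fin n → ℝ) (r sv : ℝ) : ℝ :=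
  deriv (fun r' => l v r' sv) r

/-- `∂l/∂s` evaluated at `(v, r, sv)`. -/
noncomputable def Dls {n : ℕ} (l : (Fin n → ℝ) → ℝ → ℝ → ℝ)
    (v : Fin n → ℝ) (r sv : ℝ) : ℝ :=
  deriv (fun t => l v r t) sv

set_option linter.unreachableTactic false
set_option linter.unnecessarySeqFocus false
set_option linter.unusedTactic false

lemma pd_add {n : ℕ} {f g : (Fin n → ℝ) → ℝ} {x} (hf : DifferentiableAt ℝ f x)
    (hg : DifferentiableAt ℝ g x) (c : Fin n) :
    pd c (fun y => f y + g y) x = pd c f x + pd c g x := by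
  unfold pd; rw [fderiv_fun_add hf hg]; rfl

lemma pd_neg {n : ℕ} {f : (Fin n → ℝ) → ℝ} {x} (c : Fin n) :
    pd c (fun y => -f y) x = -pd c f x := by
  unfold pd; rw [fderiv_fun_neg]; rfl

lemma pd_mul {n : ℕ} {f g : (Fin n → ℝ) → ℝ} {x} (hf : DifferentiableAt ℝ f x)
    (hg : DifferentiableAt ℝ g x) (c : Fin n) :
    pd c (fun y => f y * g y) x = pd c f x * g x + f x * pd c g x := by
  unfold pd; rw [fderiv_fun_mul hf hg]
  simp [ContinuousLinearMap.add_apply, smul_eq_mul]; ring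

lemma pd_sum {n : ℕ} {ι : Type*} (t : Finset ι) {f : ι → (Fin n → ℝ) → ℝ} {x}
    (hf : ∀ i ∈ t, DifferentiableAt ℝ (f i) x) (c : Fin n) :
    pd c (fun y => ∑ i ∈ t, f i y) x = ∑ i ∈ t, pd c (f i) x := by
  unfold pd; rw [fderiv_fun_sum hf]; simp

lemma clm_expand {n : ℕ} (L : ((Fin n → ℝ) × ℝ × ℝ) →L[ℝ] ℝ) (v : Fin n → ℝ) (r s : ℝ) :
    L (v, r, s) = (∑ i, v i * L (Pi.single i 1, 0, 0)) + r * L (0, 1, 0) + s * L (0, 0, 1) := by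
  have hv : (v, r, s) = (∑ i, v i • ((Pi.single i 1 : Fin n → ℝ), (0:ℝ), (0:ℝ)))
      + r • ((0 : Fin n → ℝ), (1:ℝ), (0:ℝ)) + s • ((0 : Fin n → ℝ), (0:ℝ), (1:ℝ)) := by
    have h1 : v = ∑ i, v i • (Pi.single i 1 : Fin n → ℝ) := by
      ext j
      simp [Finset.sum_apply, Pi.single_apply, mul_comm]
    refine Prod.ext ?_ (Prod.ext ?_ ?_) <;> simp [Prod.fst_sum, Prod.snd_sum] <;>
      first | exact h1 | rfl
  rw [hv]
  have hsm : ∀ (a : ℝ) (p : Fin n → ℝ), (a • p, (0:ℝ), (0:ℝ)) = a • (p, (0:ℝ), (0:ℝ)) := by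
    intro a p; simp [Prod.smul_mk]
  simp only [map_add, map_sum, map_smul, smul_eq_mul]

section DluF
variable {n : ℕ} {l : (Fin n → ℝ) → ℝ → ℝ → ℝ}
  (hl : Differentiable ℝ (fun p : (Fin n → ℝ) × ℝ × ℝ => l p.1 p.2.1 p.2.2))
include hl

lemma Dlu_eq (v : Fin n → ℝ) (r sv : ℝ) (i : Fin n) :
    Dlu l v r sv i
      = fderiv ℝ (fun p : (Fin n → ℝ) × ℝ × ℝ => l p.1 p.2.1 p.2.2) (v, r, sv)
          (Pi.single i 1, 0, 0) := by
  have hj : HasFDerivAt (fun w : Fin n → ℝ => (w, r, sv))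
      ((ContinuousLinearMap.id ℝ (Fin n → ℝ)).prod 0) v :=
    HasFDerivAt.prodMk (hasFDerivAt_id v) (hasFDerivAt_const (r, sv) v)
  have := ((hl (v, r, sv)).hasFDerivAt).comp v hj
  have h2 : (fun w => l w r sv)
      = (fun p : (Fin n → ℝ) × ℝ × ℝ => l p.1 p.2.1 p.2.2) ∘ (fun w => (w, r, sv)) := rfl
  unfold Dlu
  rw [h2, this.fderiv]
  rfl

lemma Dlρ_eq (v : Fin n → ℝ) (r sv : ℝ) :
    Dlρ l v r sv
      = fderiv ℝ (fun p : (Fin n → ℝ) × ℝ × ℝ => l p.1 p.2.1 p.2.2) (v, r, sv)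
          (0, 1, 0) := by
  have hj : HasDerivAt (fun r' : ℝ => ((v : Fin n → ℝ), r', sv))
      ((0 : Fin n → ℝ), (1:ℝ), (0:ℝ)) r :=
    HasDerivAt.prodMk (hasDerivAt_const r v) (HasDerivAt.prodMk (hasDerivAt_id r) (hasDerivAt_const r sv))
  have := ((hl (v, r, sv)).hasFDerivAt).comp_hasDerivAt r hj
  unfold Dlρ
  exact this.deriv

lemma Dls_eq (v : Fin n → ℝ) (r sv : ℝ) :
    Dls l v r sv
      = fderiv ℝ (fun p : (Fin n → ℝ) × ℝ × ℝ => l p.1 p.2.1 p.2.2) (v, r, sv)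
          (0, 0, 1) := by
  have hj : HasDerivAt (fun t' : ℝ => ((v : Fin n → ℝ), r, t'))
      ((0 : Fin n → ℝ), (0:ℝ), (1:ℝ)) sv :=
    HasDerivAt.prodMk (hasDerivAt_const sv v) (HasDerivAt.prodMk (hasDerivAt_const sv r) (hasDerivAt_id sv))
  have := ((hl (v, r, sv)).hasFDerivAt).comp_hasDerivAt sv hj
  unfold Dls
  exact this.deriv
end DluF

lemma sum_comm_ring {n : ℕ} (f g : Fin n → Fin n → ℝ) (h : ∀ a c, f a c = g c a) :
    ∑ x : Fin n, ∑ y : Fin n, f x y = ∑ x : Fin n, ∑ y : Fin n, g x y := by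
  rw [Finset.sum_comm]
  exact Finset.sum_congr rfl fun x _ => Finset.sum_congr rfl fun y _ => h y x

lemma key_alg {n : ℕ} (uu m bb pρ pφ psv pψ du dm : Fin n → ℝ)
    (pm pu : Fin n → Fin n → ℝ) (φ ψ rρ rs θρ θs dρ ds : ℝ)
    (hdm : ∀ i, dm i = bb i - (∑ c, uu c * pm c i) - (∑ c, m c * pu i c)
        - m i * (∑ c, pu c c) + rρ * pφ i + rs * pψ i)
    (hdρ : dρ = θρ - ∑ j, (pρ j * uu j + rρ * pu j j))
    (hds : ds = θs - ∑ j, (psv j * uu j + rs * pu j j)) :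
    (∑ i, (dm i * uu i + m i * du i)) - ((∑ i, du i * m i) + dρ * φ + ds * ψ)
      = (∑ c, (-((∑ i, (pm c i * uu i + m i * pu c i)) * uu c
            + (∑ i, m i * uu i) * pu c c)
          + ((pρ c * φ + rρ * pφ c) * uu c + (rρ * φ) * pu c c)
          + ((psv c * ψ + rs * pψ c) * uu c + (rs * ψ) * pu c c)))
        + (∑ i, bb i * uu i) - θρ * φ - θs * ψ := by
  simp only [hdm, hdρ, hds]
  simp only [sub_mul, add_mul, mul_sub, mul_add, Finset.sum_sub_distrib,
    Finset.sum_add_distrib, Finset.mul_sum, Finset.sum_mul, neg_add, neg_sub,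
    Finset.sum_neg_distrib]
  have e1 : ∑ x : Fin n, ∑ i : Fin n, uu i * pm i x * uu x
      = ∑ x : Fin n, ∑ i : Fin n, pm x i * uu i * uu x :=
    sum_comm_ring _ _ (by intro a c; ring)
  have e2 : ∑ x : Fin n, ∑ i : Fin n, m x * pu i i * uu x
      = ∑ x : Fin n, ∑ i : Fin n, m i * uu i * pu x x :=
    sum_comm_ring _ _ (by intro a c; ring)
  have e3 : ∑ x : Fin n, m x * du x = ∑ i : Fin n, du i * m i :=
    Finset.sum_congr rfl fun x _ => by ring
  have e4 : ∑ i : Fin n, pρ i * uu i * φ = ∑ x : Fin n, pρ x * φ * uu x :=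
    Finset.sum_congr rfl fun x _ => by ring
  have e5 : ∑ i : Fin n, rρ * pu i i * φ = ∑ x : Fin n, rρ * φ * pu x x :=
    Finset.sum_congr rfl fun x _ => by ring
  have e6 : ∑ i : Fin n, psv i * uu i * ψ = ∑ x : Fin n, psv x * ψ * uu x :=
    Finset.sum_congr rfl fun x _ => by ring
  have e7 : ∑ i : Fin n, rs * pu i i * ψ = ∑ x : Fin n, rs * ψ * pu x x :=
    Finset.sum_congr rfl fun x _ => by ring
  linarith [e1, e2, e3, e4, e5, e6, e7]

/-- Local energy balance for a general Lagrangian density `l(u,ρ,s)`: if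
`∂_t(∂l/∂u) + £_u(∂l/∂u) − ρ∇(∂l/∂ρ) − s∇(∂l/∂s) = b`, `∂_tρ + div(ρu) = θ_ρ`,
`∂_t s + div(su) = θ_s` (with `£_u m = u·∇m + (∇u)ᵀm + m div u`), then
`𝔢 = (∂l/∂u)·u − l` satisfies
`∂_t 𝔢 = div(−((∂l/∂u)·u)u + ρ(∂l/∂ρ)u + s(∂l/∂s)u) + b·u − θ_ρ ∂l/∂ρ − θ_s ∂l/∂s`. -/
theorem general_lagrangian_energy_balance {n : ℕ}
    (l : (Fin n → ℝ) → ℝ → ℝ → ℝ)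
    (hl : ContDiff ℝ 2 (fun p : (Fin n → ℝ) × ℝ × ℝ => l p.1 p.2.1 p.2.2))
    (u b : ℝ → (Fin n → ℝ) → (Fin n → ℝ)) (ρ s θρ θs : ℝ → (Fin n → ℝ) → ℝ)
    (hu : ∀ i, ContDiff ℝ 1 (fun p : ℝ × (Fin n → ℝ) => u p.1 p.2 i))
    (hρ : ContDiff ℝ 1 (fun p : ℝ × (Fin n → ℝ) => ρ p.1 p.2))
    (hs : ContDiff ℝ 1 (fun p : ℝ × (Fin n → ℝ) => s p.1 p.2))
    (hmom : ∀ t x i,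
      deriv (fun τ => Dlu l (u τ x) (ρ τ x) (s τ x) i) t
        + (∑ c, u t x c * pd c (fun y => Dlu l (u t y) (ρ t y) (s t y) i) x)
        + (∑ c, Dlu l (u t x) (ρ t x) (s t x) c * pd i (fun y => u t y c) x)
        + Dlu l (u t x) (ρ t x) (s t x) i * (∑ c, pd c (fun y => u t y c) x)
        - ρ t x * pd i (fun y => Dlρ l (u t y) (ρ t y) (s t y)) x
        - s t x * pd i (fun y => Dls l (u t y) (ρ t y) (s t y)) x
      = b t x i)
    (hmass : ∀ t x,
      deriv (fun τ => ρ τ x) t + ∑ j, pd j (fun y => ρ t y * u t y j) x = θρ t x)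
    (hent : ∀ t x,
      deriv (fun τ => s τ x) t + ∑ j, pd j (fun y => s t y * u t y j) x = θs t x) :
    ∀ t x,
      deriv (fun τ =>
          (∑ i, Dlu l (u τ x) (ρ τ x) (s τ x) i * u τ x i)
            - l (u τ x) (ρ τ x) (s τ x)) t
      = (∑ c, pd c (fun y =>
            -((∑ i, Dlu l (u t y) (ρ t y) (s t y) i * u t y i) * u t y c)
              + ρ t y * Dlρ l (u t y) (ρ t y) (s t y) * u t y c
              + s t y * Dls l (u t y) (ρ t y) (s t y) * u t y c) x)
        + (∑ i, b t x i * u t x i)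
        - θρ t x * Dlρ l (u t x) (ρ t x) (s t x)
        - θs t x * Dls l (u t x) (ρ t x) (s t x) := by
  intro t x
  set F : (Fin n → ℝ) × ℝ × ℝ → ℝ := fun p => l p.1 p.2.1 p.2.2 with hFdef
  have hF : Differentiable ℝ F := hl.differentiable (by norm_num)
  have hF' : ContDiff ℝ 1 (fderiv ℝ F) := hl.fderiv_right (by norm_num)
  have hDlu : ∀ τ y i, Dlu l (u τ y) (ρ τ y) (s τ y) i
      = fderiv ℝ F (u τ y, ρ τ y, s τ y) (Pi.single i 1, 0, 0) :=
    fun τ y i => Dlu_eq hF _ _ _ _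
  have hDρ : ∀ τ y, Dlρ l (u τ y) (ρ τ y) (s τ y)
      = fderiv ℝ F (u τ y, ρ τ y, s τ y) ((0 : Fin n → ℝ), (1:ℝ), (0:ℝ)) :=
    fun τ y => Dlρ_eq hF _ _ _
  have hDs : ∀ τ y, Dls l (u τ y) (ρ τ y) (s τ y)
      = fderiv ℝ F (u τ y, ρ τ y, s τ y) ((0 : Fin n → ℝ), (0:ℝ), (1:ℝ)) :=
    fun τ y => Dls_eq hF _ _ _
  simp only [hDlu, hDρ, hDs] at hmom ⊢
  -- ContDiff of the composite momentum-type fields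
  have hG : ContDiff ℝ 1 (fun q : ℝ × (Fin n → ℝ) =>
      ((fun i => u q.1 q.2 i : Fin n → ℝ), ρ q.1 q.2, s q.1 q.2)) :=
    ContDiff.prodMk (contDiff_pi.2 hu) (hρ.prodMk hs)
  have hMq : ∀ e : (Fin n → ℝ) × ℝ × ℝ, ContDiff ℝ 1
      (fun q : ℝ × (Fin n → ℝ) => fderiv ℝ F (u q.1 q.2, ρ q.1 q.2, s q.1 q.2) e) :=
    fun e => (hF'.comp hG).clm_apply contDiff_const
  -- time-slice and space-slice differentiability
  have hct : Differentiable ℝ (fun τ : ℝ => (τ, x)) :=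
    differentiable_id.prodMk (differentiable_const x)
  have hcx : Differentiable ℝ (fun y : Fin n → ℝ => (t, y)) :=
    (differentiable_const t).prodMk differentiable_id
  have hux : ∀ i, DifferentiableAt ℝ (fun τ => u τ x i) t :=
    fun i => (((hu i).differentiable one_ne_zero).comp hct).differentiableAt
  have hρx : DifferentiableAt ℝ (fun τ => ρ τ x) t :=
    ((hρ.differentiable one_ne_zero).comp hct).differentiableAt
  have hsx : DifferentiableAt ℝ (fun τ => s τ x) t :=
    ((hs.differentiable one_ne_zero).comp hct).differentiableAt
  have hMx : ∀ e, DifferentiableAt ℝ (fun τ => fderiv ℝ F (u τ x, ρ τ x, s τ x) e) t :=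
    fun e => (((hMq e).differentiable one_ne_zero).comp hct).differentiableAt
  have huy : ∀ i, DifferentiableAt ℝ (fun y => u t y i) x :=
    fun i => (((hu i).differentiable one_ne_zero).comp hcx).differentiableAt
  have hρy : DifferentiableAt ℝ (fun y => ρ t y) x :=
    ((hρ.differentiable one_ne_zero).comp hcx).differentiableAt
  have hsy : DifferentiableAt ℝ (fun y => s t y) x :=
    ((hs.differentiable one_ne_zero).comp hcx).differentiableAt
  have hMy : ∀ e, DifferentiableAt ℝ (fun y => fderiv ℝ F (u t y, ρ t y, s t y) e) x :=
    fun e => (((hMq e).differentiable one_ne_zero).comp hcx).differentiableAt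
  -- the time derivative of the energy
  have hGt : HasDerivAt (fun τ => ((fun i => u τ x i : Fin n → ℝ), ρ τ x, s τ x))
      ((fun i => deriv (fun τ => u τ x i) t), deriv (fun τ => ρ τ x) t,
        deriv (fun τ => s τ x) t) t :=
    HasDerivAt.prodMk (hasDerivAt_pi.2 fun i => (hux i).hasDerivAt) (HasDerivAt.prodMk hρx.hasDerivAt hsx.hasDerivAt)
  have hlt : HasDerivAt (fun τ => l (u τ x) (ρ τ x) (s τ x))
      (fderiv ℝ F (u t x, ρ t x, s t x)
        ((fun i => deriv (fun τ => u τ x i) t), deriv (fun τ => ρ τ x) t,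
          deriv (fun τ => s τ x) t)) t :=
    (hF _).hasFDerivAt.comp_hasDerivAt t hGt
  have hE : HasDerivAt (fun τ =>
      (∑ i, fderiv ℝ F (u τ x, ρ τ x, s τ x) (Pi.single i 1, 0, 0) * u τ x i)
        - l (u τ x) (ρ τ x) (s τ x))
      ((∑ i, (deriv (fun τ => fderiv ℝ F (u τ x, ρ τ x, s τ x) (Pi.single i 1, 0, 0)) t
            * u t x i
          + fderiv ℝ F (u t x, ρ t x, s t x) (Pi.single i 1, 0, 0)
            * deriv (fun τ => u τ x i) t))
        - fderiv ℝ F (u t x, ρ t x, s t x)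
            ((fun i => deriv (fun τ => u τ x i) t), deriv (fun τ => ρ τ x) t,
              deriv (fun τ => s τ x) t)) t :=
    (HasDerivAt.fun_sum fun i _ => ((hMx _).hasDerivAt.fun_mul (hux i).hasDerivAt)).fun_sub hlt
  rw [hE.deriv]
  rw [clm_expand]
  -- expand the divergence of the flux
  have hA : DifferentiableAt ℝ
      (fun y => ∑ i, fderiv ℝ F (u t y, ρ t y, s t y) (Pi.single i 1, 0, 0) * u t y i) x :=
    DifferentiableAt.fun_sum fun i _ => (hMy _).mul (huy i)
  have hpdA : ∀ c, pd c
      (fun y => ∑ i, fderiv ℝ F (u t y, ρ t y, s t y) (Pi.single i 1, 0, 0) * u t y i) x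
      = ∑ i, (pd c (fun y => fderiv ℝ F (u t y, ρ t y, s t y) (Pi.single i 1, 0, 0)) x
            * u t x i
          + fderiv ℝ F (u t x, ρ t x, s t x) (Pi.single i 1, 0, 0)
            * pd c (fun y => u t y i) x) := by
    intro c
    rw [pd_sum _ (fun i _ => (hMy _).fun_mul (huy i))]
    exact Finset.sum_congr rfl fun i _ => pd_mul (hMy _) (huy i) c
  have hflux : ∀ c, pd c
      (fun y =>
        -((∑ i, fderiv ℝ F (u t y, ρ t y, s t y) (Pi.single i 1, 0, 0) * u t y i) * u t y c)
          + ρ t y * fderiv ℝ F (u t y, ρ t y, s t y) ((0 : Fin n → ℝ), (1:ℝ), (0:ℝ)) * u t y c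
          + s t y * fderiv ℝ F (u t y, ρ t y, s t y) ((0 : Fin n → ℝ), (0:ℝ), (1:ℝ)) * u t y c) x
      = -((∑ i, (pd c (fun y => fderiv ℝ F (u t y, ρ t y, s t y) (Pi.single i 1, 0, 0)) x
              * u t x i
            + fderiv ℝ F (u t x, ρ t x, s t x) (Pi.single i 1, 0, 0)
              * pd c (fun y => u t y i) x)) * u t x c
          + (∑ i, fderiv ℝ F (u t x, ρ t x, s t x) (Pi.single i 1, 0, 0) * u t x i)
            * pd c (fun y => u t y c) x)
        + ((pd c (fun y => ρ t y) x
              * fderiv ℝ F (u t x, ρ t x, s t x) ((0 : Fin n → ℝ), (1:ℝ), (0:ℝ))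
            + ρ t x * pd c (fun y => fderiv ℝ F (u t y, ρ t y, s t y)
                ((0 : Fin n → ℝ), (1:ℝ), (0:ℝ))) x) * u t x c
          + (ρ t x * fderiv ℝ F (u t x, ρ t x, s t x) ((0 : Fin n → ℝ), (1:ℝ), (0:ℝ)))
            * pd c (fun y => u t y c) x)
        + ((pd c (fun y => s t y) x
              * fderiv ℝ F (u t x, ρ t x, s t x) ((0 : Fin n → ℝ), (0:ℝ), (1:ℝ))
            + s t x * pd c (fun y => fderiv ℝ F (u t y, ρ t y, s t y)
                ((0 : Fin n → ℝ), (0:ℝ), (1:ℝ))) x) * u t x c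
          + (s t x * fderiv ℝ F (u t x, ρ t x, s t x) ((0 : Fin n → ℝ), (0:ℝ), (1:ℝ)))
            * pd c (fun y => u t y c) x) := by
    intro c
    have hf1 : DifferentiableAt ℝ (fun y =>
        -((∑ i, fderiv ℝ F (u t y, ρ t y, s t y) (Pi.single i 1, 0, 0) * u t y i)
          * u t y c)) x := (hA.mul (huy c)).neg
    have hf2 : DifferentiableAt ℝ (fun y =>
        ρ t y * fderiv ℝ F (u t y, ρ t y, s t y) ((0 : Fin n → ℝ), (1:ℝ), (0:ℝ))
          * u t y c) x := ((hρy.mul (hMy _)).mul (huy c))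
    have hf3 : DifferentiableAt ℝ (fun y =>
        s t y * fderiv ℝ F (u t y, ρ t y, s t y) ((0 : Fin n → ℝ), (0:ℝ), (1:ℝ))
          * u t y c) x := ((hsy.mul (hMy _)).mul (huy c))
    rw [pd_add (hf1.fun_add hf2) hf3, pd_add hf1 hf2, pd_neg,
      pd_mul hA (huy c), hpdA c,
      pd_mul (hρy.fun_mul (hMy _)) (huy c), pd_mul hρy (hMy _),
      pd_mul (hsy.fun_mul (hMy _)) (huy c), pd_mul hsy (hMy _)]
  simp only [hflux]
  -- rewrite the evolution equations in atom form
  have hdm : ∀ i, deriv (fun τ => fderiv ℝ F (u τ x, ρ τ x, s τ x) (Pi.single i 1, 0, 0)) t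
      = b t x i
        - (∑ c, u t x c
            * pd c (fun y => fderiv ℝ F (u t y, ρ t y, s t y) (Pi.single i 1, 0, 0)) x)
        - (∑ c, fderiv ℝ F (u t x, ρ t x, s t x) (Pi.single c 1, 0, 0)
            * pd i (fun y => u t y c) x)
        - fderiv ℝ F (u t x, ρ t x, s t x) (Pi.single i 1, 0, 0)
            * (∑ c, pd c (fun y => u t y c) x)
        + ρ t x * pd i (fun y => fderiv ℝ F (u t y, ρ t y, s t y)
            ((0 : Fin n → ℝ), (1:ℝ), (0:ℝ))) x
        + s t x * pd i (fun y => fderiv ℝ F (u t y, ρ t y, s t y)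
            ((0 : Fin n → ℝ), (0:ℝ), (1:ℝ))) x := by
    intro i
    have := hmom t x i
    linarith
  have hdρ : deriv (fun τ => ρ τ x) t
      = θρ t x - ∑ j, (pd j (fun y => ρ t y) x * u t x j
          + ρ t x * pd j (fun y => u t y j) x) := by
    have h1 := hmass t x
    have h2 : ∑ j, pd j (fun y => ρ t y * u t y j) x
        = ∑ j, (pd j (fun y => ρ t y) x * u t x j + ρ t x * pd j (fun y => u t y j) x) :=
      Finset.sum_congr rfl fun j _ => pd_mul hρy (huy j) j
    linarith
  have hds : deriv (fun τ => s τ x) t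
      = θs t x - ∑ j, (pd j (fun y => s t y) x * u t x j
          + s t x * pd j (fun y => u t y j) x) := by
    have h1 := hent t x
    have h2 : ∑ j, pd j (fun y => s t y * u t y j) x
        = ∑ j, (pd j (fun y => s t y) x * u t x j + s t x * pd j (fun y => u t y j) x) :=
      Finset.sum_congr rfl fun j _ => pd_mul hsy (huy j) j
    linarith
  exact key_alg (u t x)
    (fun i => fderiv ℝ F (u t x, ρ t x, s t x) (Pi.single i 1, 0, 0))
    (fun i => b t x i)
    (fun c => pd c (fun y => ρ t y) x)
    (fun c => pd c (fun y => fderiv ℝ F (u t y, ρ t y, s t y)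
        ((0 : Fin n → ℝ), (1:ℝ), (0:ℝ))) x)
    (fun c => pd c (fun y => s t y) x)
    (fun c => pd c (fun y => fderiv ℝ F (u t y, ρ t y, s t y)
        ((0 : Fin n → ℝ), (0:ℝ), (1:ℝ))) x)
    (fun i => deriv (fun τ => u τ x i) t)
    (fun i => deriv (fun τ => fderiv ℝ F (u τ x, ρ τ x, s τ x) (Pi.single i 1, 0, 0)) t)
    (fun c i => pd c (fun y => fderiv ℝ F (u t y, ρ t y, s t y) (Pi.single i 1, 0, 0)) x)
    (fun a c => pd a (fun y => u t y c) x)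
    (fderiv ℝ F (u t x, ρ t x, s t x) ((0 : Fin n → ℝ), (1:ℝ), (0:ℝ)))
    (fderiv ℝ F (u t x, ρ t x, s t x) ((0 : Fin n → ℝ), (0:ℝ), (1:ℝ)))
    (ρ t x) (s t x) (θρ t x) (θs t x)
    (deriv (fun τ => ρ τ x) t) (deriv (fun τ => s τ x) t)
    hdm hdρ hds
end
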